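/- Let δ ≥ 0, T_D, T_Z be real numbers and let T_S = T_D + T_Z + 2δ. Let τ₁₁ᵐⁱⁿ ≤ τ₁₁ᵐᵃˣ, τ₂₁ᵐⁱⁿ ≤ τ₂₁ᵐᵃˣ, τ₂₂ᵐⁱⁿ ≤ τ₂₂ᵐᵃˣ, τ₁₂ᵐⁱⁿ ≤ τ₁₂ᵐᵃˣ be real numbers such that the absolute difference between any two of these eight delay parameters is at most τ_max ≥ 0. If T_D > τ_max and T_Z > 2δ + τ_max, then for every integer m the candidate-interval lengths are strictly positive: χ_{U,1}^m − χ_{L,1}^m > 0 and χ_{U,2}^m − χ_{L,2}^m > 0, where χ_{U,1}^m = min{(m+1)T_S + τ₁₁ᵐⁱⁿ − δ, (m+1)T_S − δ + τ₂₁ᵐᵃˣ}, χ_{L,1}^m = max{(m+1)T_S − T_Z + τ₁₁ᵐᵃˣ + δ, mT_S + T_Z + δ + τ₂₁ᵐⁱⁿ}, χ_{U,2}^m = min{mT_S + T_Z + τ₂₂ᵐⁱⁿ − δ, mT_S + δ + T_D + τ₁₂ᵐᵃˣ}, and χ_{L,2}^m = max{mT_S + τ₂₂ᵐᵃˣ +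 δ, mT_S + δ + τ₁₂ᵐⁱⁿ}. -/
import Mathlib


/-- Theorem 1 of the paper: if `T_D > τ_max` and `T_Z > 2δ + τ_max`, then every
candidate interval has strictly positive length. -/
theorem candidate_intervals_positive
    (δ TD TZ TS τmax : ℝ)
    (τ11min τ11max τ21min τ21max τ22min τ22max τ12min τ12max : ℝ)
    (hδ : 0 ≤ δ) (hτmax : 0 ≤ τmax)
    (hTS : TS = TD + TZ + 2 * δ)
    (h11 : τ11min ≤ τ11max) (h21 : τ21min ≤ τ21max)
    (h22 : τ22min ≤ τ22max) (h12 : τ12min ≤ τ12max)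
    (hpair : ∀ x y : ℝ,
      x ∈ ([τ11min, τ11max, τ21min, τ21max, τ22min, τ22max, τ12min, τ12max] : List ℝ) →
      y ∈ ([τ11min, τ11max, τ21min, τ21max, τ22min, τ22max, τ12min, τ12max] : List ℝ) →
      |x - y| ≤ τmax)
    (hTD : TD > τmax) (hTZ : TZ > 2 * δ + τmax) :
    ∀ m : ℤ,
      (min ((m + 1) * TS + τ11min - δ) ((m + 1) * TS - δ + τ21max) -
        max ((m + 1) * TS - TZ + τ11max + δ) (m * TS + TZ + δ + τ21min) > 0) ∧
      (min (m * TS + TZ + τ22min - δ) (m * TS + δ + TD + τ12max) -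
        max (m * TS + τ22max + δ) (m * TS + δ + τ12min) > 0) := by
  intro m
  have b1 : τ11max - τ11min ≤ τmax := (abs_le.mp (hpair _ _ (by simp) (by simp))).2
  have b2 : τ11min - τ21min ≥ -τmax := (abs_le.mp (hpair τ11min τ21min (by simp) (by simp))).1
  have b3 : τ11max - τ21max ≤ τmax := (abs_le.mp (hpair _ _ (by simp) (by simp))).2
  have b4 : τ22max - τ22min ≤ τmax := (abs_le.mp (hpair _ _ (by simp) (by simp))).2
  have b5 : τ12min - τ22min ≤ τmax := (abs_le.mp (hpair _ _ (by simp) (by simp))).2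
  have b6 : τ22max - τ12max ≤ τmax := (abs_le.mp (hpair _ _ (by simp) (by simp))).2
  refine ⟨sub_pos.mpr (max_lt (lt_min (by linarith) (by linarith))
      (lt_min (by push_cast; linarith) (by push_cast; linarith))),
    sub_pos.mpr (max_lt (lt_min (by linarith) (by linarith))
      (lt_min (by linarith) (by linarith)))⟩
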